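/- arXiv:1709.03589 — 2 statements merged into one kernel-verified Lean document; each statement's English description precedes it below -/
import Mathlib

section
/- Let V be an n-dimensional real vector space and let (F,G,H) and (F',G',H') be two transverse triples of complete flags in V such that T_{i,j,k}(F,G,H) = T_{i,j,k}(F',G',H') for all integers i,j,k ≥ 1 with i+j+k = n. Then there exists an invertible linear automorphism u of V with u(F^(m)) = F'^(m), u(G^(m)) = G'^(m), and u(H^(m)) = H'^(m) for all 0 ≤ m ≤ n. -/
/-- `F` is a complete flag in an `n`-dimensional real vector space:
`F 0 ⊆ F 1 ⊆ ⋯ ⊆ F n` with `dim (F l) = l` for `0 ≤ l ≤ n`. -/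
def IsFlag (n : ℕ) {V : Type*} [AddCommGroup V] [Module ℝ V]
    (F : ℕ → Submodule ℝ V) : Prop :=
  (∀ l, l < n → F l ≤ F (l + 1)) ∧ ∀ l, l ≤ n → Module.finrank ℝ (F l) = l

/-- A triple of flags is transverse if `F a + G b + H c = V` whenever `a + b + c = n`. -/
def TransverseTriple (n : ℕ) {V : Type*} [AddCommGroup V] [Module ℝ V]
    (F G H : ℕ → Submodule ℝ V) : Prop :=
  ∀ a b c : ℕ, a + b + c = n → F a ⊔ G b ⊔ H c = ⊤

/-- A pair of flags is transverse if `F a + G (n - a) = V` for all `0 ≤ a ≤ n`. -/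
def TransversePair (n : ℕ) {V : Type*} [AddCommGroup V] [Module ℝ V]
    (F G : ℕ → Submodule ℝ V) : Prop :=
  ∀ a, a ≤ n → F a ⊔ G (n - a) = ⊤

/-- `A` is the `(i,j,k)`-eruption endomorphism of the triple `(F,G,H)`: it acts as the
scalar `(n - i)/n` on `F i` and as the scalar `-i/n` on `G j + H k`. -/
def IsEruption (n i j k : ℕ) {V : Type*} [AddCommGroup V] [Module ℝ V]
    (F G H : ℕ → Submodule ℝ V) (A : Module.End ℝ V) : Prop :=
  (∀ v ∈ F i, A v = (((n : ℝ) - (i : ℝ)) / (n : ℝ)) • v) ∧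
  (∀ v ∈ G j ⊔ H k, A v = (-(i : ℝ) / (n : ℝ)) • v)

/-- `A` is the `(i, n-i)`-shearing endomorphism of the pair `(F,G)`: it acts as the
scalar `(n - i)/n` on `F i` and as the scalar `-i/n` on `G (n - i)`. -/
def IsShearing (n i : ℕ) {V : Type*} [AddCommGroup V] [Module ℝ V]
    (F G : ℕ → Submodule ℝ V) (A : Module.End ℝ V) : Prop :=
  (∀ v ∈ F i, A v = (((n : ℝ) - (i : ℝ)) / (n : ℝ)) • v) ∧
  (∀ v ∈ G (n - i), A v = (-(i : ℝ) / (n : ℝ)) • v)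

/-- `f` (whose values `f 0, …, f (n-1)` matter) is a basis adapted to the flag `F`:
`F l` is the span of `f 0, …, f (l-1)` for all `0 ≤ l ≤ n`. -/
def Adapted (n : ℕ) {V : Type*} [AddCommGroup V] [Module ℝ V]
    (F : ℕ → Submodule ℝ V) (f : ℕ → V) : Prop :=
  ∀ l, l ≤ n → F l = Submodule.span ℝ (f '' Set.Iio l)

/-- `F^(a) ∧ G^(b) ∧ H^(c) := ω (f 0, …, f (a-1), g 0, …, g (b-1), h 0, …, h (c-1))`,
for `a + b + c = n`. -/
noncomputable def wedge (n : ℕ) {V : Type*} [AddCommGroup V] [Module ℝ V]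
    (ω : AlternatingMap ℝ V ℝ (Fin n)) (f g h : ℕ → V) (a b c : ℕ) : ℝ :=
  ω fun l : Fin n =>
    if (l : ℕ) < a then f (l : ℕ)
    else if (l : ℕ) < a + b then g ((l : ℕ) - a)
    else h ((l : ℕ) - a - b)

/-- The triple ratio `T_{i,j,k}(F,G,H)` computed with adapted bases `f, g, h` of the
flags `F, G, H` and the nonzero alternating `n`-form `ω`. -/
noncomputable def tripleRatio (n : ℕ) {V : Type*} [AddCommGroup V] [Module ℝ V]
    (ω : AlternatingMap ℝ V ℝ (Fin n)) (f g h : ℕ → V) (i j k : ℕ) : ℝ :=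
  (wedge n ω f g h (i + 1) j (k - 1) / wedge n ω f g h (i + 1) (j - 1) k) *
  (wedge n ω f g h (i - 1) (j + 1) k / wedge n ω f g h i (j + 1) (k - 1)) *
  (wedge n ω f g h i (j - 1) (k + 1) / wedge n ω f g h (i - 1) j (k + 1))


set_option linter.unusedSectionVars false
set_option maxHeartbeats 1000000

open Module Submodule Set


section Aux
variable {n : ℕ} {V : Type*} [AddCommGroup V] [Module ℝ V] [FiniteDimensional ℝ V]
variable {F G H : ℕ → Submodule ℝ V}

lemma IsFlag.mono (hF : IsFlag n F) {a b : ℕ} (hab : a ≤ b) (hb : b ≤ n) : F a ≤ F b := by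
  induction b with
  | zero => cases Nat.le_zero.mp hab; exact le_rfl
  | succ m ih =>
    rcases Nat.eq_or_lt_of_le hab with rfl | hlt
    · exact le_rfl
    · exact le_trans (ih (by omega) (by omega)) (hF.1 m (by omega))

lemma IsFlag.bot_eq (hF : IsFlag n F) : F 0 = ⊥ := by
  rw [← Submodule.finrank_eq_zero (S := F 0)]
  exact hF.2 0 (Nat.zero_le n)

lemma IsFlag.top_eq (hV : Module.finrank ℝ V = n) (hF : IsFlag n F) : F n = ⊤ := by
  apply Submodule.eq_top_of_finrank_eq
  rw [hF.2 n le_rfl, hV]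

/-- rank of a sup of two flag pieces in a transverse triple -/
lemma finrank_sup2 (hV : Module.finrank ℝ V = n)
    (hF : IsFlag n F) (hG : IsFlag n G) (hH : IsFlag n H)
    (hT : TransverseTriple n F G H) {b c : ℕ} (hbc : b + c ≤ n) :
    Module.finrank ℝ ↥(G b ⊔ H c) = b + c := by
  have htop := hT (n - b - c) b c (by omega)
  have h1 : Module.finrank ℝ ↥(F (n-b-c) ⊔ (G b ⊔ H c)) = n := by
    rw [← sup_assoc] at *
    rw [htop, finrank_top, hV]
  have h2 := Submodule.finrank_sup_add_finrank_inf_eq (F (n-b-c)) (G b ⊔ H c)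
  have h3 := Submodule.finrank_sup_add_finrank_inf_eq (G b) (H c)
  have hFr := hF.2 (n-b-c) (by omega)
  have hGr := hG.2 b (by omega)
  have hHr := hH.2 c (by omega)
  have hle : Module.finrank ℝ ↥(G b ⊔ H c) ≤ b + c := by omega
  omega

lemma inf_triple_bot (hV : Module.finrank ℝ V = n)
    (hF : IsFlag n F) (hG : IsFlag n G) (hH : IsFlag n H)
    (hT : TransverseTriple n F G H) {a b c : ℕ} (habc : a + b + c = n) :
    F a ⊓ (G b ⊔ H c) = ⊥ := by
  have h2 := Submodule.finrank_sup_add_finrank_inf_eq (F a) (G b ⊔ H c)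
  have htop := hT a b c habc
  rw [sup_assoc] at htop
  rw [htop, finrank_top, hV] at h2
  have hFr := hF.2 a (by omega)
  have hs := finrank_sup2 hV hF hG hH hT (b := b) (c := c) (by omega)
  rw [← Submodule.finrank_eq_zero (S := F a ⊓ (G b ⊔ H c))]
  omega

lemma line_exists (hV : Module.finrank ℝ V = n)
    (hF : IsFlag n F) (hG : IsFlag n G) (hH : IsFlag n H)
    (hT : TransverseTriple n F G H) {a b c : ℕ} (habc : a + b + c = n + 1)
    (ha : 1 ≤ a) (han : a ≤ n) :
    ∃ v ∈ F a ⊓ (G b ⊔ H c), v ≠ 0 := by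
  have h2 := Submodule.finrank_sup_add_finrank_inf_eq (F a) (G b ⊔ H c)
  have hFr := hF.2 a han
  have hs := finrank_sup2 hV hF hG hH hT (b := b) (c := c) (by omega)
  have hle : Module.finrank ℝ ↥(F a ⊔ (G b ⊔ H c)) ≤ n := by
    rw [← hV]; exact Submodule.finrank_le _
  have hpos : 0 < Module.finrank ℝ ↥(F a ⊓ (G b ⊔ H c)) := by omega
  have hne : F a ⊓ (G b ⊔ H c) ≠ ⊥ := by
    intro hb
    rw [hb] at hpos; simp at hpos
  obtain ⟨v, hv1, hv2⟩ := Submodule.exists_mem_ne_zero_of_ne_bot hne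
  exact ⟨v, hv1, hv2⟩


lemma sup_line_eq {W W' : Submodule ℝ V} {m : ℕ} (hle : W ≤ W')
    (hW : finrank ℝ W = m) (hW' : finrank ℝ W' = m + 1) {v : V} (hv : v ∈ W')
    (hvW : v ∉ W) : W' = W ⊔ span ℝ {v} := by
  have hv0 : v ≠ 0 := fun h => hvW (h ▸ W.zero_mem)
  have hinf : W ⊓ span ℝ {v} = ⊥ := by
    rw [eq_bot_iff]
    rintro x ⟨hx1, hx2⟩
    obtain ⟨t, rfl⟩ := Submodule.mem_span_singleton.mp hx2
    rcases eq_or_ne t 0 with rfl | ht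
    · simp
    · exfalso
      apply hvW
      have := W.smul_mem t⁻¹ hx1
      rwa [smul_smul, inv_mul_cancel₀ ht, one_smul] at this
  have h2 := Submodule.finrank_sup_add_finrank_inf_eq W (span ℝ {v})
  rw [hinf] at h2
  have h3 : finrank ℝ (span ℝ {v}) = 1 := finrank_span_singleton hv0
  have hle2 : W ⊔ span ℝ {v} ≤ W' := sup_le hle (by simpa [Submodule.span_le])
  refine (Submodule.eq_of_le_of_finrank_le hle2 ?_).symm
  have : finrank ℝ ↥(W ⊔ span ℝ {v}) = m + 1 := by simp at h2; omega
  omega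

lemma exists_frame (hV : Module.finrank ℝ V = n) (hn : 1 ≤ n)
    (hF : IsFlag n F) (hG : IsFlag n G) (hH : IsFlag n H)
    (hT : TransverseTriple n F G H) :
    ∃ e : ℕ → V,
      (∀ a, a ≤ n → F a = span ℝ (e '' Iio a)) ∧
      (∀ b, b ≤ n → G b = span ℝ ((fun q => e (n - 1 - q)) '' Iio b)) ∧
      H 1 = span ℝ {∑ a ∈ Finset.range n, e a} := by
  have hH0 : H 0 = ⊥ := hH.bot_eq
  have pairFG_bot : ∀ a, a ≤ n → F a ⊓ G (n - a) = ⊥ := by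
    intro a ha
    have := inf_triple_bot hV hF hG hH hT (a := a) (b := n - a) (c := 0) (by omega)
    rwa [hH0, sup_bot_eq] at this
  have line0 : ∀ a, a < n → ∃ v, v ∈ F (a + 1) ⊓ G (n - a) ∧ v ≠ 0 := by
    intro a ha
    have := line_exists hV hF hG hH hT (a := a + 1) (b := n - a) (c := 0)
      (by omega) (by omega) (by omega)
    rwa [hH0, sup_bot_eq] at this
  choose v hv hv0 using line0
  set e₀ : ℕ → V := fun a => if h : a < n then v a h else 0 with he₀
  have he₀mem : ∀ a, a < n → e₀ a ∈ F (a + 1) ⊓ G (n - a) := by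
    intro a ha; simp only [he₀, dif_pos ha]; exact hv a ha
  have he₀0 : ∀ a, a < n → e₀ a ≠ 0 := by
    intro a ha; simp only [he₀, dif_pos ha]; exact hv0 a ha
  -- spans for F
  have hspanF : ∀ a, a ≤ n → F a = span ℝ (e₀ '' Iio a) := by
    intro a
    induction a with
    | zero =>
      intro _
      rw [hF.bot_eq, show (Iio 0 : Set ℕ) = ∅ by ext x; simp, Set.image_empty,
        Submodule.span_empty]
    | succ a ih =>
      intro ha
      have hIa : (Iio (a + 1) : Set ℕ) = insert a (Iio a) := by ext x; simp
      have hnotin : e₀ a ∉ F a := by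
        intro hin
        have hG' : e₀ a ∈ G (n - a) := (he₀mem a (by omega)).2
        have : e₀ a ∈ F a ⊓ G (n - a) := ⟨hin, hG'⟩
        rw [pairFG_bot a (by omega)] at this
        exact he₀0 a (by omega) this
      have := sup_line_eq (hF.1 a (by omega)) (hF.2 a (by omega)) (hF.2 (a+1) ha)
        (he₀mem a (by omega)).1 hnotin
      rw [this, ih (by omega), hIa, Set.image_insert_eq, Submodule.span_insert,
        sup_comm]
  -- spans for G
  have hspanG : ∀ b, b ≤ n → G b = span ℝ ((fun q => e₀ (n - 1 - q)) '' Iio b) := by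
    intro b
    induction b with
    | zero =>
      intro _
      rw [hG.bot_eq, show (Iio 0 : Set ℕ) = ∅ by ext x; simp, Set.image_empty,
        Submodule.span_empty]
    | succ b ih =>
      intro hb
      have hIb : (Iio (b + 1) : Set ℕ) = insert b (Iio b) := by ext x; simp
      have hmem : e₀ (n - 1 - b) ∈ G (b + 1) := by
        have := (he₀mem (n - 1 - b) (by omega)).2
        have harith : n - (n - 1 - b) = b + 1 := by omega
        rwa [harith] at this
      have hmemF : e₀ (n - 1 - b) ∈ F (n - b) := by
        have := (he₀mem (n - 1 - b) (by omega)).1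
        have harith : n - 1 - b + 1 = n - b := by omega
        rwa [harith] at this
      have hnotin : e₀ (n - 1 - b) ∉ G b := by
        intro hin
        have hbb : F (n - b) ⊓ G b = ⊥ := by
          have := pairFG_bot (n - b) (by omega)
          have harith : n - (n - b) = b := by omega
          rwa [harith] at this
        have : e₀ (n - 1 - b) ∈ F (n - b) ⊓ G b := ⟨hmemF, hin⟩
        rw [hbb] at this
        exact he₀0 (n - 1 - b) (by omega) this
      have := sup_line_eq (hG.1 b (by omega)) (hG.2 b (by omega)) (hG.2 (b+1) hb)
        hmem hnotin
      rw [this, ih (by omega), hIb, Set.image_insert_eq, Submodule.span_insert,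
        sup_comm]
  -- basis from e₀
  have hrange : Set.range (fun i : Fin n => e₀ (i : ℕ)) = e₀ '' Iio n := by
    ext x
    constructor
    · rintro ⟨i, rfl⟩; exact ⟨i, i.2, rfl⟩
    · rintro ⟨a, ha, rfl⟩; exact ⟨⟨a, ha⟩, rfl⟩
  have htople : ⊤ ≤ span ℝ (Set.range (fun i : Fin n => e₀ (i : ℕ))) := by
    rw [hrange, ← hspanF n le_rfl, hF.top_eq hV]
  set bE : Basis (Fin n) ℝ V :=
    basisOfTopLeSpanOfCardEqFinrank (fun i : Fin n => e₀ (i : ℕ)) htople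
      (by simp [hV]) with hbE
  have hbEcoe : ∀ i : Fin n, bE i = e₀ (i : ℕ) := by
    intro i
    rw [hbE, coe_basisOfTopLeSpanOfCardEqFinrank]
  -- the vector spanning H 1
  have hH1rank : finrank ℝ (H 1) = 1 := hH.2 1 hn
  have hH1ne : H 1 ≠ ⊥ := by
    intro hb; rw [hb] at hH1rank; simp at hH1rank
  obtain ⟨w, hwH, hw0⟩ := Submodule.exists_mem_ne_zero_of_ne_bot hH1ne
  have hH1 : H 1 = span ℝ {w} := by
    refine (Submodule.eq_of_le_of_finrank_le ?_ ?_).symm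
    · rwa [Submodule.span_le, Set.singleton_subset_iff]
    · rw [hH1rank, finrank_span_singleton hw0]
  -- coordinates are nonzero
  have hc : ∀ i : Fin n, bE.repr w i ≠ 0 := by
    intro i hci
    have hsum := bE.sum_repr w
    have hwK : w ∈ F (i : ℕ) ⊔ G (n - 1 - (i : ℕ)) := by
      rw [← hsum]
      apply Submodule.sum_mem
      intro j _
      rcases eq_or_ne j i with rfl | hji
      · rw [hci, zero_smul]; exact Submodule.zero_mem _
      · apply Submodule.smul_mem
        rcases lt_or_gt_of_ne (fun h => hji (Fin.ext h) : (j:ℕ) ≠ (i:ℕ)) with hlt | hgt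
        · apply Submodule.mem_sup_left
          have hmem := (he₀mem (j : ℕ) j.2).1
          have hle := hF.mono (a := (j : ℕ) + 1) (b := (i : ℕ)) (by omega)
            (by have := i.2; omega)
          exact hle (by rw [hbEcoe]; exact hmem)
        · apply Submodule.mem_sup_right
          have hmem := (he₀mem (j : ℕ) j.2).2
          have hle := hG.mono (a := n - (j : ℕ)) (b := n - 1 - (i : ℕ)) (by omega)
            (by omega)
          exact hle (by rw [hbEcoe]; exact hmem)
    have htop := hT (i : ℕ) (n - 1 - (i : ℕ)) 1 (by have := i.2; omega)
    have hKle : F (i : ℕ) ⊔ G (n - 1 - (i : ℕ)) ⊔ H 1 ≤ F (i : ℕ) ⊔ G (n - 1 - (i : ℕ)) := by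
      apply sup_le le_rfl
      rw [hH1, Submodule.span_le, Set.singleton_subset_iff]
      exact hwK
    rw [htop] at hKle
    have h2 := Submodule.finrank_sup_add_finrank_inf_eq (F (i : ℕ)) (G (n - 1 - (i : ℕ)))
    have hFr := hF.2 (i : ℕ) (by have := i.2; omega)
    have hGr := hG.2 (n - 1 - (i : ℕ)) (by omega)
    have hrank := Submodule.finrank_mono hKle
    rw [finrank_top, hV] at hrank
    have := i.2
    omega
  -- the rescaled frame
  set e : ℕ → V := fun a => if h : a < n then bE.repr w ⟨a, h⟩ • e₀ a else 0 with he
  have hsum : ∑ a ∈ Finset.range n, e a = w := by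
    rw [← Fin.sum_univ_eq_sum_range]
    have : ∀ i : Fin n, e (i : ℕ) = bE.repr w i • bE i := by
      intro i
      simp only [he, dif_pos i.2, hbEcoe]
    rw [Finset.sum_congr rfl (fun i _ => this i)]
    exact bE.sum_repr w
  -- span preservation
  have hspmem : ∀ (s : Set ℕ) (hs : ∀ x ∈ s, x < n),
      span ℝ (e '' s) = span ℝ (e₀ '' s) := by
    intro s hs
    apply le_antisymm
    · rw [Submodule.span_le]
      rintro x ⟨j, hj, rfl⟩
      have hjn := hs j hj
      simp only [he, dif_pos hjn]
      exact Submodule.smul_mem _ _ (Submodule.subset_span ⟨j, hj, rfl⟩)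
    · rw [Submodule.span_le]
      rintro x ⟨j, hj, rfl⟩
      have hjn := hs j hj
      have : e₀ j = (bE.repr w ⟨j, hjn⟩)⁻¹ • e j := by
        simp only [he, dif_pos hjn, smul_smul, inv_mul_cancel₀ (hc ⟨j, hjn⟩), one_smul]
      rw [this]
      exact Submodule.smul_mem _ _ (Submodule.subset_span ⟨j, hj, rfl⟩)
  refine ⟨e, ?_, ?_, ?_⟩
  · intro a ha
    rw [hspanF a ha]
    refine (hspmem (Iio a) (fun x hx => by simp at hx; omega)).symm ▸ rfl
  · intro b hb
    have h1 : ((fun q => e (n - 1 - q)) '' Iio b) = e '' ((fun q => n - 1 - q) '' Iio b) := by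
      rw [Set.image_image]
    have h2 : ((fun q => e₀ (n - 1 - q)) '' Iio b) = e₀ '' ((fun q => n - 1 - q) '' Iio b) := by
      rw [Set.image_image]
    rw [hspanG b hb, h1, h2]
    exact (hspmem _ (fun x hx => by
      obtain ⟨q, hq, rfl⟩ := hx
      show n - 1 - q < n
      omega)).symm
  · rw [hsum, hH1]

end Aux


section Tool
variable {n : ℕ} {V : Type*} [AddCommGroup V] [Module ℝ V] [FiniteDimensional ℝ V]
variable {ω : AlternatingMap ℝ V ℝ (Fin n)}

lemma omega_ne_zero_of_span (hV : Module.finrank ℝ V = n) (hω : ω ≠ 0)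
    {s : Fin n → V} (hs : ⊤ ≤ span ℝ (Set.range s)) : ω s ≠ 0 := by
  set b : Basis (Fin n) ℝ V := basisOfTopLeSpanOfCardEqFinrank s hs (by simp [hV]) with hb
  have hcoe : ⇑b = s := by rw [hb]; exact coe_basisOfTopLeSpanOfCardEqFinrank _ _ _
  intro h0
  apply hω
  have := AlternatingMap.eq_smul_basis_det b ω
  rw [hcoe, h0, zero_smul] at this
  exact this

lemma omega_eq_zero_of_mem_span {s : Fin n → V} {p : Fin n}
    (h : s p ∈ span ℝ (s '' {q | q ≠ p})) : ω s = 0 := by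
  apply AlternatingMap.map_linearDependent
  intro hli
  exact LinearIndependent.notMem_span_image hli (by simp : p ∉ {q | q ≠ p}) h

lemma omega_update_sum {s : Fin n → V} {p : Fin n} {m : ℕ} {f : ℕ → V} :
    ω (Function.update s p (∑ a ∈ Finset.range m, f a)) =
      ∑ a ∈ Finset.range m, ω (Function.update s p (f a)) := by
  induction m with
  | zero => simp [AlternatingMap.map_update_zero]
  | succ m ih => rw [Finset.sum_range_succ, ω.map_update_add, ih, Finset.sum_range_succ]

lemma det_perm_pair (b b' : Basis (Fin n) ℝ V) {p : Fin n → Fin n}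
    (hp : Function.Injective p) :
    b.det (⇑b' ∘ p) = b.det ⇑b' * b.det (⇑b ∘ p) := by
  cases Nat.eq_zero_or_pos n with
  | inl h =>
    subst h
    have e1 : ⇑b' ∘ p = ⇑b' := funext fun x => absurd x.2 (by omega)
    have e2 : ⇑b ∘ p = ⇑b := funext fun x => absurd x.2 (by omega)
    rw [e1, e2, Basis.det_self, mul_one]
  | inr _ =>
    set σ := Equiv.ofBijective p (Finite.injective_iff_bijective.mp hp) with hσ
    have hpσ : p = ⇑σ := rfl
    rw [hpσ]
    rw [show ⇑b' ∘ ⇑σ = (⇑b' ∘ ⇑σ) from rfl]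
    rw [b.det.map_perm ⇑b' σ, b.det.map_perm ⇑b σ, Basis.det_self]
    rcases Int.units_eq_one_or (Equiv.Perm.sign σ) with h1 | h1 <;> rw [h1] <;> simp

/-- wedge only depends on the relevant initial segments -/
lemma wedge_congr {f g h f' g' h' : ℕ → V} {a b c : ℕ} (habc : n ≤ a + b + c)
    (hf : ∀ l, l < a → f l = f' l) (hg : ∀ l, l < b → g l = g' l)
    (hh : ∀ l, l < c → h l = h' l) :
    wedge n ω f g h a b c = wedge n ω f' g' h' a b c := by
  unfold wedge
  congr 1
  funext l
  have hl := l.2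
  split_ifs with h1 h2
  · exact hf _ h1
  · exact hg _ (by omega)
  · exact hh _ (by omega)

end Tool

/-- the index pattern used for levels 0 and 1 -/
def pat (n a : ℕ) : Fin n → Fin n := fun l =>
  if (l : ℕ) < a then l else ⟨n - 1 - ((l : ℕ) - a), by have := l.2; omega⟩

lemma pat_inj {n a : ℕ} (ha : a ≤ n) : Function.Injective (pat n a) := by
  intro l1 l2 hl
  have h1 := l1.2
  have h2 := l2.2
  have hv := congrArg Fin.val hl
  unfold pat at hv
  apply Fin.ext
  split_ifs at hv <;> first | omega | (simp at hv; omega)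

section Ctx
variable {n : ℕ} {V : Type*} [AddCommGroup V] [Module ℝ V] [FiniteDimensional ℝ V]
variable {F G H : ℕ → Submodule ℝ V}
variable {ω : AlternatingMap ℝ V ℝ (Fin n)} {e h : ℕ → V}

/-- nonvanishing of wedges of adapted families of a transverse triple -/
lemma wedge_ne_zero (hV : Module.finrank ℝ V = n)
    (hT : TransverseTriple n F G H)
    (heF : ∀ a, a ≤ n → F a = span ℝ (e '' Iio a))
    (heG : ∀ b, b ≤ n → G b = span ℝ ((fun q => e (n - 1 - q)) '' Iio b))
    (hhH : ∀ l, l ≤ n → H l = span ℝ (h '' Iio l))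
    (hω : ω ≠ 0) {a b c : ℕ} (habc : a + b + c = n) :
    wedge n ω e (fun q => e (n - 1 - q)) h a b c ≠ 0 := by
  apply omega_ne_zero_of_span hV hω
  rw [← hT a b c habc]
  have hFle : F a ≤ span ℝ (Set.range fun l : Fin n =>
      if (l : ℕ) < a then e (l : ℕ)
      else if (l : ℕ) < a + b then e (n - 1 - ((l : ℕ) - a))
      else h ((l : ℕ) - a - b)) := by
    rw [heF a (by omega), Submodule.span_le]
    rintro x ⟨j, hj, rfl⟩
    simp only [mem_Iio] at hj
    apply Submodule.subset_span
    exact ⟨⟨j, by omega⟩, by simp only [if_pos hj]⟩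
  have hGle : G b ≤ span ℝ (Set.range fun l : Fin n =>
      if (l : ℕ) < a then e (l : ℕ)
      else if (l : ℕ) < a + b then e (n - 1 - ((l : ℕ) - a))
      else h ((l : ℕ) - a - b)) := by
    rw [heG b (by omega), Submodule.span_le]
    rintro x ⟨j, hj, rfl⟩
    simp only [mem_Iio] at hj
    apply Submodule.subset_span
    refine ⟨⟨a + j, by omega⟩, ?_⟩
    have c1 : ¬ (a + j < a) := by omega
    have c2 : a + j < a + b := by omega
    simp only [if_neg c1, if_pos c2]
    congr 1
    omega
  have hHle : H c ≤ span ℝ (Set.range fun l : Fin n =>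
      if (l : ℕ) < a then e (l : ℕ)
      else if (l : ℕ) < a + b then e (n - 1 - ((l : ℕ) - a))
      else h ((l : ℕ) - a - b)) := by
    rw [hhH c (by omega), Submodule.span_le]
    rintro x ⟨j, hj, rfl⟩
    simp only [mem_Iio] at hj
    apply Submodule.subset_span
    refine ⟨⟨a + b + j, by omega⟩, ?_⟩
    have c1 : ¬ (a + b + j < a) := by omega
    have c2 : ¬ (a + b + j < a + b) := by omega
    simp only [if_neg c1, if_neg c2]
    congr 1
    omega
  exact sup_le (sup_le hFle hGle) hHle

/-- level-0 wedges are permutations of the frame basis -/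
lemma wedge_c0 (bE : Basis (Fin n) ℝ V) (hbEcoe : ∀ i : Fin n, bE i = e (i : ℕ))
    {a : ℕ} (ha : a ≤ n) :
    wedge n ω e (fun q => e (n - 1 - q)) h a (n - a) 0 = ω (⇑bE ∘ pat n a) := by
  unfold wedge
  congr 1
  funext l
  have hl := l.2
  simp only [Function.comp_apply, pat]
  split_ifs with c1 c2
  · rw [hbEcoe]
  · rw [hbEcoe]
  · omega

/-- level-1 wedges are permutations of the frame basis -/
lemma wedge_c1 (bE : Basis (Fin n) ℝ V) (hbEcoe : ∀ i : Fin n, bE i = e (i : ℕ))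
    (hh0 : h 0 = ∑ i ∈ Finset.range n, e i)
    {a b : ℕ} (hab : a + b + 1 = n) :
    wedge n ω e (fun q => e (n - 1 - q)) h a b 1 = ω (⇑bE ∘ pat n a) := by
  have hn : 1 ≤ n := by omega
  set s0 : Fin n → V := ⇑bE ∘ pat n a with hs0
  have hs0v : ∀ l : Fin n, s0 l = if (l : ℕ) < a then e (l : ℕ)
      else e (n - 1 - ((l : ℕ) - a)) := by
    intro l
    simp only [hs0, Function.comp_apply, pat]
    split_ifs <;> rw [hbEcoe]
  set P : Fin n := ⟨n - 1, by omega⟩ with hP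
  have hPv : (P : ℕ) = n - 1 := rfl
  have hfam : (fun l : Fin n =>
      if (l : ℕ) < a then e (l : ℕ)
      else if (l : ℕ) < a + b then e (n - 1 - ((l : ℕ) - a))
      else h ((l : ℕ) - a - b)) = Function.update s0 P (∑ i ∈ Finset.range n, e i) := by
    funext l
    have hl := l.2
    rcases eq_or_ne l P with rfl | hlP
    · have c1 : ¬ ((P : ℕ) < a) := by omega
      have c2 : ¬ ((P : ℕ) < a + b) := by omega
      simp only [if_neg c1, if_neg c2, Function.update_self]
      rw [show (P : ℕ) - a - b = 0 by omega, hh0]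
    · have hlPv : (l : ℕ) ≠ (P : ℕ) := fun hc => hlP (Fin.ext hc)
      rw [Function.update_of_ne hlP, hs0v l]
      have hlv : (l : ℕ) < a + b := by omega
      by_cases c1 : (l : ℕ) < a
      · simp only [if_pos c1]
      · simp only [if_neg c1, if_pos hlv]
  unfold wedge
  rw [hfam, omega_update_sum]
  have hmem : a ∈ Finset.range n := Finset.mem_range.mpr (by omega)
  have hz : ∀ i ∈ Finset.range n, i ≠ a → ω (Function.update s0 P (e i)) = 0 := by
    intro i hi hia
    simp only [Finset.mem_range] at hi
    rcases Nat.lt_or_ge i a with hlt | hge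
    · have hne : (⟨i, by omega⟩ : Fin n) ≠ P := by
        intro hc
        have := congrArg Fin.val hc
        simp only [hPv] at this
        omega
      apply ω.map_eq_zero_of_eq _ (i := (⟨i, by omega⟩ : Fin n)) (j := P) _ hne
      rw [Function.update_of_ne hne, Function.update_self, hs0v]
      simp only [if_pos hlt]
    · have hgt : a < i := by omega
      have hpn : a + (n - 1 - i) < n := by omega
      have hne : (⟨a + (n - 1 - i), hpn⟩ : Fin n) ≠ P := by
        intro hc
        have := congrArg Fin.val hc
        simp only [hPv] at this
        omega
      apply ω.map_eq_zero_of_eq _ (i := (⟨a + (n - 1 - i), hpn⟩ : Fin n)) (j := P) _ hne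
      rw [Function.update_of_ne hne, Function.update_self, hs0v]
      have hvv : ((⟨a + (n - 1 - i), hpn⟩ : Fin n) : ℕ) = a + (n - 1 - i) := rfl
      have c1 : ¬ (((⟨a + (n - 1 - i), hpn⟩ : Fin n) : ℕ) < a) := by omega
      rw [if_neg c1]
      congr 1
      omega
  rw [Finset.sum_eq_single_of_mem a hmem hz]
  have hsP : s0 P = e a := by
    rw [hs0v]
    have c1 : ¬ ((P : ℕ) < a) := by omega
    rw [if_neg c1]
    congr 1
    omega
  rw [show Function.update s0 P (e a) = s0 by rw [← hsP]; simp]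

lemma exists_h (hV : Module.finrank ℝ V = n) (hn : 1 ≤ n)
    (hG : IsFlag n G) (hH : IsFlag n H) (hT : TransverseTriple n F G H)
    (heF : ∀ a, a ≤ n → F a = span ℝ (e '' Iio a))
    (heH1 : H 1 = span ℝ {∑ i ∈ Finset.range n, e i})
    (hω : ω ≠ 0) {κ : ℝ} (hκ : κ ≠ 0) :
    ∃ h : ℕ → V, (∀ l, l ≤ n → H l = span ℝ (h '' Iio l)) ∧
      h 0 = ∑ i ∈ Finset.range n, e i ∧
      ∀ c, 2 ≤ c → c ≤ n → wedge n ω e (fun q => e (n - 1 - q)) h (n - c) 0 c = κ := by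
  have hIio0 : (Iio (0:ℕ) : Set ℕ) = ∅ := by ext x; simp
  have key : ∀ m, 1 ≤ m → m ≤ n → ∃ h : ℕ → V,
      (∀ l, l ≤ m → H l = span ℝ (h '' Iio l)) ∧
      h 0 = ∑ i ∈ Finset.range n, e i ∧
      (∀ c, 2 ≤ c → c ≤ m → wedge n ω e (fun q => e (n - 1 - q)) h (n - c) 0 c = κ) := by
    intro m
    induction m with
    | zero => intro h1 _; omega
    | succ m ih =>
      intro _ hmn
      rcases Nat.lt_or_ge m 1 with hm0 | hm1
      · have hm : m = 0 := by omega
        subst hm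
        refine ⟨fun _ => ∑ i ∈ Finset.range n, e i, ?_, rfl, by omega⟩
        intro l hl
        interval_cases l
        · rw [hH.bot_eq, hIio0, Set.image_empty, Submodule.span_empty]
        · rw [heH1]
          congr 1
          rw [show (Iio (1:ℕ) : Set ℕ) = {0} by ext x; simp [Nat.lt_one_iff], Set.image_singleton]
      · obtain ⟨h, hsp, hh0, hanc⟩ := ih hm1 (by omega)
        have hex : ∃ v, v ∈ H (m + 1) ∧ v ∉ H m := by
          by_contra hc
          push_neg at hc
          have hle : H (m + 1) ≤ H m := fun v hv => hc v hv
          have hmono := Submodule.finrank_mono hle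
          rw [hH.2 m (by omega), hH.2 (m + 1) hmn] at hmono
          omega
        obtain ⟨v, hvmem, hvnot⟩ := hex
        have hHsup : H (m + 1) = H m ⊔ span ℝ {v} :=
          sup_line_eq (hH.1 m (by omega)) (hH.2 m (by omega)) (hH.2 (m + 1) hmn) hvmem hvnot
        set t := wedge n ω e (fun q => e (n - 1 - q)) (Function.update h m v)
          (n - (m + 1)) 0 (m + 1) with ht
        have ht0 : t ≠ 0 := by
          rw [ht]
          apply omega_ne_zero_of_span hV hω
          have htop := hT (n - (m + 1)) 0 (m + 1) (by omega)
          rw [hG.bot_eq, sup_bot_eq] at htop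
          rw [← htop]
          apply sup_le
          · rw [heF (n - (m + 1)) (by omega), Submodule.span_le]
            rintro x ⟨j, hj, rfl⟩
            simp only [mem_Iio] at hj
            apply Submodule.subset_span
            exact ⟨⟨j, by omega⟩, by simp only [if_pos hj]⟩
          · rw [hHsup]
            apply sup_le
            · rw [hsp m le_rfl, Submodule.span_le]
              rintro x ⟨j, hj, rfl⟩
              simp only [mem_Iio] at hj
              apply Submodule.subset_span
              refine ⟨⟨n - (m + 1) + j, by omega⟩, ?_⟩
              have c1 : ¬ ((n - (m + 1) + j : ℕ) < n - (m + 1)) := by omega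
              have c2 : ¬ ((n - (m + 1) + j : ℕ) < n - (m + 1) + 0) := by omega
              simp only [if_neg c1, if_neg c2]
              rw [show (n - (m + 1) + j : ℕ) - (n - (m + 1)) - 0 = j by omega]
              rw [Function.update_of_ne (by omega)]
            · rw [Submodule.span_le, Set.singleton_subset_iff]
              apply Submodule.subset_span
              refine ⟨⟨n - 1, by omega⟩, ?_⟩
              have c1 : ¬ ((n - 1 : ℕ) < n - (m + 1)) := by omega
              have c2 : ¬ ((n - 1 : ℕ) < n - (m + 1) + 0) := by omega
              simp only [if_neg c1, if_neg c2]
              rw [show (n - 1 : ℕ) - (n - (m + 1)) - 0 = m by omega, Function.update_self]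
        set w : V := (κ / t) • v with hw
        have hwne : w ∉ H m := by
          intro hin
          apply hvnot
          have := (H m).smul_mem (t / κ) hin
          rwa [hw, smul_smul, div_mul_div_comm, mul_comm,
            div_self (by exact mul_ne_zero hκ ht0), one_smul] at this
        have hwmem : w ∈ H (m + 1) := (H (m + 1)).smul_mem _ hvmem
        refine ⟨Function.update h m w, ?_, ?_, ?_⟩
        · intro l hl
          rcases Nat.lt_or_ge l (m + 1) with hlm | hlm
          · rw [hsp l (by omega)]
            congr 1
            apply Set.image_congr
            intro x hx
            simp only [mem_Iio] at hx
            rw [Function.update_of_ne (by omega)]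
          · have hl1 : l = m + 1 := by omega
            subst hl1
            rw [hHsup, show (Iio (m + 1) : Set ℕ) = insert m (Iio m) by ext x; simp,
              Set.image_insert_eq, Submodule.span_insert, Function.update_self]
            have him : Function.update h m w '' Iio m = h '' Iio m := by
              apply Set.image_congr
              intro x hx
              simp only [mem_Iio] at hx
              rw [Function.update_of_ne (by omega)]
            rw [him, ← hsp m le_rfl]
            have hspan_eq : span ℝ {w} = span ℝ {v} := by
              rw [hw]
              exact Submodule.span_singleton_smul_eq
                (IsUnit.mk0 _ (div_ne_zero hκ ht0)) v
            rw [hspan_eq, sup_comm]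
        · rw [Function.update_of_ne (by omega), hh0]
        · intro c hc2 hcm
          rcases Nat.lt_or_ge c (m + 1) with hcm' | hcm'
          · rw [← hanc c hc2 (by omega)]
            apply wedge_congr (by omega) (fun _ _ => rfl) (fun _ _ => rfl)
            intro l hl
            rw [Function.update_of_ne (by omega)]
          · have hc1 : c = m + 1 := by omega
            subst hc1
            set sV : Fin n → V := fun l : Fin n =>
              if (l : ℕ) < n - (m + 1) then e (l : ℕ)
              else if (l : ℕ) < n - (m + 1) + 0 then e (n - 1 - ((l : ℕ) - (n - (m + 1))))
              else Function.update h m v ((l : ℕ) - (n - (m + 1)) - 0) with hsV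
            have htv : t = ω sV := by rw [ht]; rfl
            set pos : Fin n := ⟨n - 1, by omega⟩ with hpos
            have hposv : (pos : ℕ) = n - 1 := rfl
            have hsVpos : sV pos = v := by
              simp only [hsV]
              have c1 : ¬ ((pos : ℕ) < n - (m + 1)) := by omega
              have c2 : ¬ ((pos : ℕ) < n - (m + 1) + 0) := by omega
              simp only [if_neg c1, if_neg c2]
              rw [show (pos : ℕ) - (n - (m + 1)) - 0 = m by omega, Function.update_self]
            have h1 : (fun l : Fin n =>
                if (l : ℕ) < n - (m + 1) then e (l : ℕ)
                else if (l : ℕ) < n - (m + 1) + 0 then e (n - 1 - ((l : ℕ) - (n - (m + 1))))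
                else Function.update h m w ((l : ℕ) - (n - (m + 1)) - 0)) =
                Function.update sV pos w := by
              funext l
              have hl := l.2
              rcases eq_or_ne l pos with rfl | hlp
              · have c1 : ¬ ((pos : ℕ) < n - (m + 1)) := by omega
                have c2 : ¬ ((pos : ℕ) < n - (m + 1) + 0) := by omega
                simp only [if_neg c1, if_neg c2, Function.update_self]
                rw [show (pos : ℕ) - (n - (m + 1)) - 0 = m by omega, Function.update_self]
              · have hlpv : (l : ℕ) ≠ n - 1 := fun hc => hlp (Fin.ext (by rw [hc, hposv]))
                rw [Function.update_of_ne hlp]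
                simp only [hsV]
                by_cases c1 : (l : ℕ) < n - (m + 1)
                · simp only [if_pos c1]
                · simp only [if_neg c1, Nat.add_zero, if_neg c1]
                  rw [Function.update_of_ne (by omega), Function.update_of_ne (by omega)]
            show ω _ = κ
            rw [h1, hw, ω.map_update_smul, show Function.update sV pos v = sV by
              rw [← hsVpos]; simp, ← htv]
            rw [smul_eq_mul]
            field_simp
  obtain ⟨h, hsp, hh0, hanc⟩ := key n hn le_rfl
  exact ⟨h, hsp, hh0, hanc⟩

lemma delta_eq {F' G' H' : ℕ → Submodule ℝ V} {e' h' : ℕ → V}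
    (hV : Module.finrank ℝ V = n) (hn : 1 ≤ n)
    (hT : TransverseTriple n F G H) (hT' : TransverseTriple n F' G' H')
    (heF : ∀ a, a ≤ n → F a = span ℝ (e '' Iio a))
    (heG : ∀ b, b ≤ n → G b = span ℝ ((fun q => e (n - 1 - q)) '' Iio b))
    (hhH : ∀ l, l ≤ n → H l = span ℝ (h '' Iio l))
    (heF' : ∀ a, a ≤ n → F' a = span ℝ (e' '' Iio a))
    (heG' : ∀ b, b ≤ n → G' b = span ℝ ((fun q => e' (n - 1 - q)) '' Iio b))
    (hhH' : ∀ l, l ≤ n → H' l = span ℝ (h' '' Iio l))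
    (hh0 : h 0 = ∑ i ∈ Finset.range n, e i)
    (hh0' : h' 0 = ∑ i ∈ Finset.range n, e' i)
    (bE bE' : Basis (Fin n) ℝ V)
    (hbEcoe : ∀ i : Fin n, bE i = e (i : ℕ)) (hbEcoe' : ∀ i : Fin n, bE' i = e' (i : ℕ))
    (hωdef : ω = bE.det) {ε : ℝ} (hε : ε = ω ⇑bE')
    (hanc : ∀ c, 2 ≤ c → c ≤ n →
      wedge n ω e (fun q => e (n - 1 - q)) h (n - c) 0 c = 1)
    (hanc' : ∀ c, 2 ≤ c → c ≤ n →
      wedge n ω e' (fun q => e' (n - 1 - q)) h' (n - c) 0 c = ε)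
    (hr : ∀ i j k : ℕ, 1 ≤ i → 1 ≤ j → 1 ≤ k → i + j + k = n →
      tripleRatio n ω e (fun q => e (n - 1 - q)) h i j k =
      tripleRatio n ω e' (fun q => e' (n - 1 - q)) h' i j k) :
    ∀ c, c ≤ n → ∀ a b, a + b + c = n →
      wedge n ω e' (fun q => e' (n - 1 - q)) h' a b c =
        ε * wedge n ω e (fun q => e (n - 1 - q)) h a b c := by
  have hω : ω ≠ 0 := by
    intro h0
    have := Basis.det_self bE
    rw [← hωdef, h0] at this
    simp at this
  have hεne : ε ≠ 0 := by
    rw [hε]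
    apply omega_ne_zero_of_span hV hω
    rw [bE'.span_eq]
  intro c
  induction c using Nat.strong_induction_on with
  | _ c IH =>
    intro hc a b hab
    rcases Nat.lt_or_ge c 2 with hc2 | hc2
    · interval_cases c
      · -- level 0
        have hb : b = n - a := by omega
        subst hb
        rw [wedge_c0 bE hbEcoe (by omega), wedge_c0 bE' hbEcoe' (by omega), hωdef, hε, hωdef]
        exact det_perm_pair bE bE' (pat_inj (by omega))
      · -- level 1
        rw [wedge_c1 bE hbEcoe hh0 (by omega), wedge_c1 bE' hbEcoe' hh0' (by omega),
          hωdef, hε, hωdef]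
        exact det_perm_pair bE bE' (pat_inj (by omega))
    · -- level c ≥ 2, inner induction on b
      have inner : ∀ b a, a + b + c = n →
          wedge n ω e' (fun q => e' (n - 1 - q)) h' a b c =
            ε * wedge n ω e (fun q => e (n - 1 - q)) h a b c := by
        intro b
        induction b with
        | zero =>
          intro a hab
          have ha : a = n - c := by omega
          subst ha
          rw [hanc c hc2 hc, hanc' c hc2 hc, mul_one]
        | succ b ihb =>
          intro a hab
          have hr' := hr (a + 1) (b + 1) (c - 1) (by omega) (by omega) (by omega) (by omega)
          unfold tripleRatio at hr'
          rw [show a + 1 + 1 = a + 2 by omega, show b + 1 - 1 = b by omega,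
            show c - 1 - 1 = c - 2 by omega, show a + 1 - 1 = a by omega,
            show b + 1 + 1 = b + 2 by omega, show c - 1 + 1 = c by omega] at hr'
          set g : ℕ → V := fun q => e (n - 1 - q) with hg
          set g' : ℕ → V := fun q => e' (n - 1 - q) with hg'
          set X1 := wedge n ω e g h (a + 2) (b + 1) (c - 2) with hX1d
          set X2 := wedge n ω e g h (a + 2) b (c - 1) with hX2d
          set X3 := wedge n ω e g h a (b + 2) (c - 1) with hX3d
          set X4 := wedge n ω e g h (a + 1) (b + 2) (c - 2) with hX4d
          set A := wedge n ω e g h (a + 1) b c with hAd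
          set B := wedge n ω e g h a (b + 1) c with hBd
          have hX1 : X1 ≠ 0 := wedge_ne_zero hV hT heF heG hhH hω (by omega)
          have hX2 : X2 ≠ 0 := wedge_ne_zero hV hT heF heG hhH hω (by omega)
          have hX3 : X3 ≠ 0 := wedge_ne_zero hV hT heF heG hhH hω (by omega)
          have hX4 : X4 ≠ 0 := wedge_ne_zero hV hT heF heG hhH hω (by omega)
          have hA : A ≠ 0 := wedge_ne_zero hV hT heF heG hhH hω (by omega)
          have hB : B ≠ 0 := wedge_ne_zero hV hT heF heG hhH hω (by omega)
          have hB' : wedge n ω e' g' h' a (b + 1) c ≠ 0 :=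
            wedge_ne_zero hV hT' heF' heG' hhH' hω (by omega)
          have e1 : wedge n ω e' g' h' (a + 2) (b + 1) (c - 2) = ε * X1 :=
            IH (c - 2) (by omega) (by omega) _ _ (by omega)
          have e2 : wedge n ω e' g' h' (a + 2) b (c - 1) = ε * X2 :=
            IH (c - 1) (by omega) (by omega) _ _ (by omega)
          have e3 : wedge n ω e' g' h' a (b + 2) (c - 1) = ε * X3 :=
            IH (c - 1) (by omega) (by omega) _ _ (by omega)
          have e4 : wedge n ω e' g' h' (a + 1) (b + 2) (c - 2) = ε * X4 :=
            IH (c - 2) (by omega) (by omega) _ _ (by omega)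
          have eA : wedge n ω e' g' h' (a + 1) b c = ε * A := ihb (a + 1) (by omega)
          rw [e1, e2, e3, e4, eA] at hr'
          rw [mul_div_mul_left X1 X2 hεne, mul_div_mul_left X3 X4 hεne] at hr'
          have hQ : X1 / X2 * (X3 / X4) ≠ 0 :=
            mul_ne_zero (div_ne_zero hX1 hX2) (div_ne_zero hX3 hX4)
          have h6 := mul_left_cancel₀ hQ hr'.symm
          rw [div_eq_div_iff hB' hB] at h6
          have h7 : A * wedge n ω e' g' h' a (b + 1) c = A * (ε * B) := by
            rw [← h6]; ring
          exact mul_left_cancel₀ hA h7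
      exact inner b a hab

end Ctx

def slotH (n : ℕ) {V : Type*} [AddCommGroup V] [Module ℝ V]
    (f g h x : ℕ → V) (a b c : ℕ) : Fin n → V := fun l =>
  if (l : ℕ) < a then f (l : ℕ)
  else if (l : ℕ) < a + b then g ((l : ℕ) - a)
  else if (l : ℕ) < a + b + c then h ((l : ℕ) - a - b)
  else x ((l : ℕ) - a - b - c)

section Ctx2
variable {n : ℕ} {V : Type*} [AddCommGroup V] [Module ℝ V] [FiniteDimensional ℝ V]
variable {F G H : ℕ → Submodule ℝ V}
variable {ω : AlternatingMap ℝ V ℝ (Fin n)} {e h : ℕ → V}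

lemma slotH_wedge {f g h x : ℕ → V} {a b c c' : ℕ}
    (hx : ∀ m, a + b + c + m < n → x m = h (c + m)) :
    ω (slotH n f g h x a b c) = wedge n ω f g h a b c' := by
  unfold slotH wedge
  congr 1
  funext l
  have hl := l.2
  split_ifs with h1 h2 h3
  · rfl
  · rfl
  · rfl
  · rw [hx ((l : ℕ) - a - b - c) (by omega)]
    congr 1
    omega

lemma mem_of_forall_slot_zero
    (hV : Module.finrank ℝ V = n)
    (hF : IsFlag n F) (hG : IsFlag n G) (hH : IsFlag n H)
    (hT : TransverseTriple n F G H)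
    (heF : ∀ a, a ≤ n → F a = span ℝ (e '' Iio a))
    (heG : ∀ b, b ≤ n → G b = span ℝ ((fun q => e (n - 1 - q)) '' Iio b))
    (hhH : ∀ l, l ≤ n → H l = span ℝ (h '' Iio l))
    (hω : ω ≠ 0) {c : ℕ} (hc : c < n) {z : V}
    (hz : ∀ a b, a + b + c = n - 1 →
      ω (slotH n e (fun q => e (n - 1 - q)) h (fun _ => z) a b c) = 0) :
    z ∈ H c := by
  have hn : 1 ≤ n := by omega
  set g : ℕ → V := fun q => e (n - 1 - q) with hg
  set pos : Fin n := ⟨n - 1, by omega⟩ with hpos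
  have hposv : (pos : ℕ) = n - 1 := rfl
  -- slotH with tail z is an update at pos
  have hupd : ∀ (a b : ℕ), a + b + c = n - 1 → ∀ x : V,
      slotH n e g h (fun _ => x) a b c =
        Function.update (slotH n e g h (fun _ => 0) a b c) pos x := by
    intro a b hab x
    funext l
    have hl := l.2
    rcases eq_or_ne l pos with rfl | hlp
    · have c1 : ¬ ((pos : ℕ) < a) := by omega
      have c2 : ¬ ((pos : ℕ) < a + b) := by omega
      have c3 : ¬ ((pos : ℕ) < a + b + c) := by omega
      simp only [slotH, if_neg c1, if_neg c2, if_neg c3, Function.update_self]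
    · have hlv : (l : ℕ) < n - 1 := by
        rcases Nat.lt_or_ge (l : ℕ) (n - 1) with hh | hh
        · exact hh
        · exact absurd (Fin.ext (by omega : (l : ℕ) = (pos : ℕ))) hlp
      rw [Function.update_of_ne hlp]
      simp only [slotH]
      have c3 : (l : ℕ) < a + b + c := by omega
      by_cases c1 : (l : ℕ) < a
      · simp only [if_pos c1]
      · by_cases c2 : (l : ℕ) < a + b
        · simp only [if_neg c1, if_pos c2]
        · simp only [if_neg c1, if_neg c2, if_pos c3]
  -- the linear functionals
  have hablt : ∀ a : Fin (n - c), (a : ℕ) + (n - 1 - c - (a : ℕ)) + c = n - 1 := by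
    intro a; have := a.2; omega
  set ψ : Fin (n - c) → V →ₗ[ℝ] ℝ := fun a =>
    { toFun := fun x => ω (slotH n e g h (fun _ => x) a (n - 1 - c - (a : ℕ)) c)
      map_add' := by
        intro x y
        show ω (slotH n e g h (fun _ => x + y) (a : ℕ) (n - 1 - c - (a : ℕ)) c) =
          ω (slotH n e g h (fun _ => x) (a : ℕ) (n - 1 - c - (a : ℕ)) c) +
          ω (slotH n e g h (fun _ => y) (a : ℕ) (n - 1 - c - (a : ℕ)) c)
        rw [hupd _ _ (hablt a) x, hupd _ _ (hablt a) y, hupd _ _ (hablt a) (x + y),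
          ω.map_update_add]
      map_smul' := by
        intro t x
        show ω (slotH n e g h (fun _ => t • x) (a : ℕ) (n - 1 - c - (a : ℕ)) c) =
          t • ω (slotH n e g h (fun _ => x) (a : ℕ) (n - 1 - c - (a : ℕ)) c)
        rw [hupd _ _ (hablt a) x, hupd _ _ (hablt a) (t • x), ω.map_update_smul] } with hψ
  set Φ : V →ₗ[ℝ] (Fin (n - c) → ℝ) := LinearMap.pi ψ with hΦ
  -- H c is inside the kernel
  have hker_le : H c ≤ LinearMap.ker Φ := by
    rw [hhH c (by omega), Submodule.span_le]
    rintro x ⟨m, hm, rfl⟩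
    simp only [mem_Iio] at hm
    rw [SetLike.mem_coe, LinearMap.mem_ker]
    funext a
    have hab := hablt a
    rw [hΦ, LinearMap.pi_apply, hψ]
    show ω (slotH n e g h (fun _ => h m) (a : ℕ) (n - 1 - c - (a : ℕ)) c) = 0
    set b := n - 1 - c - (a : ℕ)
    have hdup : ((⟨(a : ℕ) + b + m, by omega⟩ : Fin n)) ≠ pos := by
      intro hc'
      have := congrArg Fin.val hc'
      simp only [hposv] at this
      omega
    apply ω.map_eq_zero_of_eq _ (i := pos) (j := (⟨(a : ℕ) + b + m, by omega⟩ : Fin n))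
      _ (Ne.symm hdup)
    have v1 : slotH n e g h (fun _ => h m) (a : ℕ) b c pos = h m := by
      simp only [slotH]
      have c1 : ¬ ((pos : ℕ) < (a : ℕ)) := by omega
      have c2 : ¬ ((pos : ℕ) < (a : ℕ) + b) := by omega
      have c3 : ¬ ((pos : ℕ) < (a : ℕ) + b + c) := by omega
      simp only [if_neg c1, if_neg c2, if_neg c3]
    have v2 : slotH n e g h (fun _ => h m) (a : ℕ) b c ⟨(a : ℕ) + b + m, by omega⟩ = h m := by
      simp only [slotH]
      have hvv : ((⟨(a : ℕ) + b + m, by omega⟩ : Fin n) : ℕ) = (a : ℕ) + b + m := rfl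
      have c1 : ¬ (((a : ℕ) + b + m) < (a : ℕ)) := by omega
      have c2 : ¬ (((a : ℕ) + b + m) < (a : ℕ) + b) := by omega
      have c3 : ((a : ℕ) + b + m) < (a : ℕ) + b + c := by omega
      simp only [hvv, if_neg c1, if_neg c2, if_pos c3]
      congr 1
      omega
    rw [v1, v2]
  -- surjectivity vectors
  have hsurj : ∀ a0 : Fin (n - c), ∃ y : V,
      Φ y = fun j => if a0 = j then (1 : ℝ) else 0 := by
    intro a0
    have ha0 := a0.2
    set b0 := n - c - (a0 : ℕ) with hb0
    obtain ⟨v, hvmem, hv0⟩ := line_exists hV hF hG hH hT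
      (a := (a0 : ℕ) + 1) (b := b0) (c := c) (by omega) (by omega) (by omega)
    have hvF : v ∈ F ((a0 : ℕ) + 1) := hvmem.1
    have hvGH : v ∈ G b0 ⊔ H c := hvmem.2
    have hfampos : ∀ (a b : ℕ), a + b + c = n - 1 → ∀ x : V,
        slotH n e g h (fun _ => x) a b c pos = x := by
      intro a b hab x
      rw [hupd a b hab x, Function.update_self]
    -- vanishing against the other functionals
    have hψ0 : ∀ a' : Fin (n - c), a' ≠ a0 → ψ a' v = 0 := by
      intro a' hne
      have ha' := a'.2
      set b' := n - 1 - c - (a' : ℕ) with hb'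
      set fam := slotH n e g h (fun _ => v) (a' : ℕ) b' c with hfam
      show ω fam = 0
      apply omega_eq_zero_of_mem_span (p := pos)
      have hfp : fam pos = v := by rw [hfam]; exact hfampos _ _ (by omega) v
      rw [hfp]
      have hHle : H c ≤ span ℝ (fam '' {q | q ≠ pos}) := by
        rw [hhH c (by omega), Submodule.span_le]
        rintro x ⟨m, hm, rfl⟩
        simp only [mem_Iio] at hm
        apply Submodule.subset_span
        refine ⟨⟨(a' : ℕ) + b' + m, by omega⟩, ?_, ?_⟩
        · intro hc'
          have := congrArg Fin.val hc'
          simp only [hposv] at this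
          omega
        · simp only [hfam, slotH]
          have hvv : ((⟨(a' : ℕ) + b' + m, by omega⟩ : Fin n) : ℕ) = (a' : ℕ) + b' + m := rfl
          have c1 : ¬ ((a' : ℕ) + b' + m < (a' : ℕ)) := by omega
          have c2 : ¬ ((a' : ℕ) + b' + m < (a' : ℕ) + b') := by omega
          have c3 : (a' : ℕ) + b' + m < (a' : ℕ) + b' + c := by omega
          simp only [hvv, if_neg c1, if_neg c2, if_pos c3]
          congr 1
          omega
      rcases lt_or_gt_of_ne (fun hcc => hne (Fin.ext hcc) : (a' : ℕ) ≠ (a0 : ℕ))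
        with hlt | hgt
      · -- a' < a0 : use v ∈ G b0 ⊔ H c
        have hGle : G b0 ≤ span ℝ (fam '' {q | q ≠ pos}) := by
          rw [heG b0 (by omega), Submodule.span_le]
          rintro x ⟨q, hq, rfl⟩
          simp only [mem_Iio] at hq
          apply Submodule.subset_span
          refine ⟨⟨(a' : ℕ) + q, by omega⟩, ?_, ?_⟩
          · intro hc'
            have := congrArg Fin.val hc'
            simp only [hposv] at this
            omega
          · simp only [hfam, slotH]
            have hvv : ((⟨(a' : ℕ) + q, by omega⟩ : Fin n) : ℕ) = (a' : ℕ) + q := rfl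
            have c1 : ¬ ((a' : ℕ) + q < (a' : ℕ)) := by omega
            have c2 : (a' : ℕ) + q < (a' : ℕ) + b' := by omega
            simp only [hvv, if_neg c1, if_pos c2]
            congr 1
            omega
        exact (sup_le hGle hHle) hvGH
      · -- a0 < a' : use v ∈ F (a0 + 1) ≤ F a'
        have hFle : F (a' : ℕ) ≤ span ℝ (fam '' {q | q ≠ pos}) := by
          rw [heF (a' : ℕ) (by omega), Submodule.span_le]
          rintro x ⟨j, hj, rfl⟩
          simp only [mem_Iio] at hj
          apply Submodule.subset_span
          refine ⟨⟨j, by omega⟩, ?_, ?_⟩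
          · intro hc'
            have := congrArg Fin.val hc'
            simp only [hposv] at this
            omega
          · simp only [hfam, slotH]
            have hvv : ((⟨j, by omega⟩ : Fin n) : ℕ) = j := rfl
            simp only [hvv, if_pos hj]
        exact hFle (hF.mono (by omega) (by omega) hvF)
    -- nonvanishing of the diagonal functional
    have hb0pos : 1 ≤ b0 := by omega
    have hb0' : n - 1 - c - (a0 : ℕ) = b0 - 1 := by omega
    have hψa0 : ψ a0 v ≠ 0 := by
      set b' := n - 1 - c - (a0 : ℕ) with hb'd
      set fam := slotH n e g h (fun _ => v) (a0 : ℕ) b' c with hfam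
      show ω fam ≠ 0
      apply omega_ne_zero_of_span hV hω
      have htop := hT (a0 : ℕ) b0 c (by omega)
      rw [← htop]
      have hFle : F (a0 : ℕ) ≤ span ℝ (Set.range fam) := by
        rw [heF (a0 : ℕ) (by omega), Submodule.span_le]
        rintro x ⟨j, hj, rfl⟩
        simp only [mem_Iio] at hj
        apply Submodule.subset_span
        refine ⟨⟨j, by omega⟩, ?_⟩
        simp only [hfam, slotH]
        have hvv : ((⟨j, by omega⟩ : Fin n) : ℕ) = j := rfl
        simp only [hvv, if_pos hj]
      have hHle : H c ≤ span ℝ (Set.range fam) := by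
        rw [hhH c (by omega), Submodule.span_le]
        rintro x ⟨m, hm, rfl⟩
        simp only [mem_Iio] at hm
        apply Submodule.subset_span
        refine ⟨⟨(a0 : ℕ) + b' + m, by omega⟩, ?_⟩
        simp only [hfam, slotH]
        have hvv : ((⟨(a0 : ℕ) + b' + m, by omega⟩ : Fin n) : ℕ) = (a0 : ℕ) + b' + m := rfl
        have c1 : ¬ ((a0 : ℕ) + b' + m < (a0 : ℕ)) := by omega
        have c2 : ¬ ((a0 : ℕ) + b' + m < (a0 : ℕ) + b') := by omega
        have c3 : (a0 : ℕ) + b' + m < (a0 : ℕ) + b' + c := by omega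
        simp only [hvv, if_neg c1, if_neg c2, if_pos c3]
        congr 1
        omega
      have hG'le : G b' ≤ span ℝ (Set.range fam) := by
        rw [heG b' (by omega), Submodule.span_le]
        rintro x ⟨q, hq, rfl⟩
        simp only [mem_Iio] at hq
        apply Submodule.subset_span
        refine ⟨⟨(a0 : ℕ) + q, by omega⟩, ?_⟩
        simp only [hfam, slotH]
        have hvv : ((⟨(a0 : ℕ) + q, by omega⟩ : Fin n) : ℕ) = (a0 : ℕ) + q := rfl
        have c1 : ¬ ((a0 : ℕ) + q < (a0 : ℕ)) := by omega
        have c2 : (a0 : ℕ) + q < (a0 : ℕ) + b' := by omega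
        simp only [hvv, if_neg c1, if_pos c2]
        congr 1
        omega
      have hvle : span ℝ {v} ≤ span ℝ (Set.range fam) := by
        rw [Submodule.span_le, Set.singleton_subset_iff]
        apply Submodule.subset_span
        exact ⟨pos, hfampos (a0 : ℕ) b' (by omega) v⟩
      have hW : G b0 ⊔ H c = (G b' ⊔ H c) ⊔ span ℝ {v} := by
        apply sup_line_eq
        · exact sup_le_sup_right (hG.mono (by omega) (by omega)) _
        · rw [finrank_sup2 hV hF hG hH hT (b := b') (c := c) (by omega)]
        · rw [finrank_sup2 hV hF hG hH hT (b := b0) (c := c) (by omega)]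
          omega
        · exact hvGH
        · intro hin
          have hbot := inf_triple_bot hV hF hG hH hT
            (a := (a0 : ℕ) + 1) (b := b') (c := c) (by omega)
          have : v ∈ F ((a0 : ℕ) + 1) ⊓ (G b' ⊔ H c) := ⟨hvF, hin⟩
          rw [hbot] at this
          exact hv0 this
      have hGle : G b0 ≤ span ℝ (Set.range fam) := by
        have h1 : G b0 ≤ G b' ⊔ H c ⊔ span ℝ {v} := le_trans le_sup_left (le_of_eq hW)
        exact le_trans h1 (sup_le (sup_le hG'le hHle) hvle)
      exact sup_le (sup_le hFle hGle) hHle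
    -- build the preimage
    refine ⟨(ψ a0 v)⁻¹ • v, ?_⟩
    funext j
    rw [hΦ, LinearMap.pi_apply, map_smul, smul_eq_mul]
    rcases eq_or_ne a0 j with rfl | hja0
    · rw [if_pos rfl, inv_mul_cancel₀ hψa0]
    · rw [if_neg hja0, hψ0 j (Ne.symm hja0), mul_zero]
  -- assemble: the kernel of Φ is exactly H c
  have hrange : LinearMap.range Φ = ⊤ := by
    rw [← top_le_iff]
    intro x _
    rw [pi_eq_sum_univ x]
    apply Submodule.sum_mem
    intro a0 _
    apply Submodule.smul_mem
    obtain ⟨y, hy⟩ := hsurj a0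
    exact ⟨y, hy⟩
  have hrk := LinearMap.finrank_range_add_finrank_ker Φ
  rw [hrange, finrank_top, Module.finrank_fintype_fun_eq_card, Fintype.card_fin, hV] at hrk
  have hHc : finrank ℝ (H c) = c := hH.2 c (le_of_lt hc)
  have hker : H c = LinearMap.ker Φ :=
    Submodule.eq_of_le_of_finrank_le hker_le (by omega)
  rw [hker, LinearMap.mem_ker]
  funext a
  rw [hΦ, LinearMap.pi_apply]
  show ω (slotH n e g h (fun _ => z) (a : ℕ) (n - 1 - c - (a : ℕ)) c) = 0
  exact hz (a : ℕ) (n - 1 - c - (a : ℕ)) (hablt a)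

/-- slotH with a constant tail is an update of the zero-tail family at the last slot -/
lemma slotH_update {f g h : ℕ → V} {a b c : ℕ} (hn : 1 ≤ n) (hab : a + b + c = n - 1)
    (x : V) :
    slotH n f g h (fun _ => x) a b c =
      Function.update (slotH n f g h (fun _ => 0) a b c) (⟨n - 1, by omega⟩ : Fin n) x := by
  set pos : Fin n := ⟨n - 1, by omega⟩ with hpos
  have hposv : (pos : ℕ) = n - 1 := rfl
  funext l
  have hl := l.2
  rcases eq_or_ne l pos with hleq | hlp
  · rw [hleq, Function.update_self]
    have c1 : ¬ ((pos : ℕ) < a) := by omega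
    have c2 : ¬ ((pos : ℕ) < a + b) := by omega
    have c3 : ¬ ((pos : ℕ) < a + b + c) := by omega
    simp only [slotH, if_neg c1, if_neg c2, if_neg c3]
  · have hlv : (l : ℕ) < n - 1 := by
      rcases Nat.lt_or_ge (l : ℕ) (n - 1) with hh | hh
      · exact hh
      · exact absurd (Fin.ext (by omega : (l : ℕ) = (pos : ℕ))) hlp
    rw [Function.update_of_ne hlp]
    simp only [slotH]
    have c3 : (l : ℕ) < a + b + c := by omega
    by_cases c1 : (l : ℕ) < a
    · simp only [if_pos c1]
    · by_cases c2 : (l : ℕ) < a + b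
      · simp only [if_neg c1, if_pos c2]
      · simp only [if_neg c1, if_neg c2, if_pos c3]

/-- pushing a basis-change equivalence through a top form multiplies by ε -/
lemma omega_comp_equiv (bE bE' : Basis (Fin n) ℝ V) (hωdef : ω = bE.det)
    {ε : ℝ} (hε : ε = ω ⇑bE') (s : Fin n → V) :
    ω (⇑(bE.equiv bE' (Equiv.refl _)) ∘ s) = ε * ω s := by
  set u := bE.equiv bE' (Equiv.refl _) with hu
  set ω2 : AlternatingMap ℝ V ℝ (Fin n) := ω.compLinearMap (u : V →ₗ[ℝ] V) with hω2
  have h1 : ω2 = ω2 ⇑bE • bE.det := AlternatingMap.eq_smul_basis_det bE ω2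
  have h2 : ω2 ⇑bE = ε := by
    rw [hω2, AlternatingMap.compLinearMap_apply]
    have he : (fun i : Fin n => (u : V →ₗ[ℝ] V) (bE i)) = ⇑bE' := by
      funext i
      show u (bE i) = bE' i
      rw [hu, Basis.equiv_apply]
      rfl
    rw [he, hε]
  have h3 : ω2 s = ω (⇑u ∘ s) := by
    rw [hω2, AlternatingMap.compLinearMap_apply]
    rfl
  rw [← h3]
  rw [h1, h2]
  rw [AlternatingMap.smul_apply, hωdef]
  rfl

lemma map_H {F' G' H' : ℕ → Submodule ℝ V} {e' h' : ℕ → V} {u : V ≃ₗ[ℝ] V}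
    (hV : Module.finrank ℝ V = n) (hn : 1 ≤ n)
    (hF' : IsFlag n F') (hG' : IsFlag n G') (hH' : IsFlag n H')
    (hT' : TransverseTriple n F' G' H')
    (heF' : ∀ a, a ≤ n → F' a = span ℝ (e' '' Iio a))
    (heG' : ∀ b, b ≤ n → G' b = span ℝ ((fun q => e' (n - 1 - q)) '' Iio b))
    (hhH : ∀ l, l ≤ n → H l = span ℝ (h '' Iio l))
    (hhH' : ∀ l, l ≤ n → H' l = span ℝ (h' '' Iio l))
    (hω : ω ≠ 0) {ε : ℝ}
    (hΔ : ∀ c, c ≤ n → ∀ a b, a + b + c = n →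
      wedge n ω e' (fun q => e' (n - 1 - q)) h' a b c =
        ε * wedge n ω e (fun q => e (n - 1 - q)) h a b c)
    (hue : ∀ a, a < n → u (e a) = e' a)
    (hωu : ∀ s : Fin n → V, ω (⇑u ∘ s) = ε * ω s) :
    ∀ c, c ≤ n → span ℝ ((⇑u ∘ h) '' Iio c) = span ℝ (h' '' Iio c) := by
  set g : ℕ → V := fun q => e (n - 1 - q) with hg
  set g' : ℕ → V := fun q => e' (n - 1 - q) with hg'
  -- joint induction
  suffices hmain : ∀ c, c ≤ n →
      (∀ a b, a + b + c ≤ n → ∀ x : ℕ → V,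
        ω (slotH n e' g' (⇑u ∘ h) x a b c) = ω (slotH n e' g' h' x a b c)) ∧
      span ℝ ((⇑u ∘ h) '' Iio c) = span ℝ (h' '' Iio c) by
    intro c hc
    exact (hmain c hc).2
  intro c
  induction c with
  | zero =>
    intro _
    constructor
    · intro a b hab x
      congr 1
      funext l
      simp only [slotH]
      by_cases c1 : (l : ℕ) < a
      · simp only [if_pos c1]
      · by_cases c2 : (l : ℕ) < a + b
        · simp only [if_neg c1, if_pos c2]
        · simp only [if_neg c1, if_neg c2, Nat.add_zero]
    · rw [show (Iio (0 : ℕ) : Set ℕ) = ∅ by ext x; simp]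
      simp
  | succ c ih =>
    intro hc1
    obtain ⟨hP, hspan⟩ := ih (by omega)
    -- first: u (h c) - h' c lies in H' c
    have hz : u (h c) - h' c ∈ H' c := by
      apply mem_of_forall_slot_zero hV hF' hG' hH' hT' heF' heG' hhH' hω (by omega)
      intro a b hab
      rw [slotH_update hn hab, ω.map_update_sub, ← slotH_update hn hab,
        ← slotH_update hn hab]
      -- ψ'(u (h c)) computation
      have huh : ω (slotH n e' g' h' (fun _ => u (h c)) a b c) =
          wedge n ω e' g' h' a b (c + 1) := by
        rw [← hP a b (by omega) (fun _ => u (h c))]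
        have hcomp : slotH n e' g' (⇑u ∘ h) (fun _ => u (h c)) a b c =
            ⇑u ∘ slotH n e g h (fun _ => h c) a b c := by
          funext l
          have hl := l.2
          simp only [slotH, Function.comp_apply]
          by_cases c1 : (l : ℕ) < a
          · simp only [if_pos c1]
            rw [hue _ (by omega)]
          · by_cases c2 : (l : ℕ) < a + b
            · simp only [if_neg c1, if_pos c2]
              rw [hg', hg]
              rw [hue _ (by omega)]
            · by_cases c3 : (l : ℕ) < a + b + c
              · simp only [if_neg c1, if_neg c2, if_pos c3]
              · simp only [if_neg c1, if_neg c2, if_neg c3]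
        rw [hcomp, hωu]
        rw [slotH_wedge (c' := c + 1) (fun m hm => by
          have : m = 0 := by omega
          rw [this, Nat.add_zero])]
        rw [hΔ (c + 1) (by omega) a b (by omega)]
      -- ψ'(h' c) computation
      have hh'c : ω (slotH n e' g' h' (fun _ => h' c) a b c) =
          wedge n ω e' g' h' a b (c + 1) := by
        rw [slotH_wedge (c' := c + 1) (fun m hm => by
          have : m = 0 := by omega
          rw [this, Nat.add_zero])]
      rw [huh, hh'c, sub_self]
    constructor
    · -- P (c+1)
      intro a b hab x
      set P : Fin n := ⟨a + b + c, by omega⟩ with hPd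
      have hPv : (P : ℕ) = a + b + c := rfl
      have step1 : slotH n e' g' (⇑u ∘ h) x a b (c + 1) =
          slotH n e' g' (⇑u ∘ h) (fun m => if m = 0 then u (h c) else x (m - 1)) a b c := by
        funext l
        have hl := l.2
        simp only [slotH, Function.comp_apply]
        by_cases c1 : (l : ℕ) < a
        · simp only [if_pos c1]
        · by_cases c2 : (l : ℕ) < a + b
          · simp only [if_neg c1, if_pos c2]
          · by_cases c3 : (l : ℕ) < a + b + c
            · have c4 : (l : ℕ) < a + b + (c + 1) := by omega
              simp only [if_neg c1, if_neg c2, if_pos c3, if_pos c4]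
            · by_cases c4 : (l : ℕ) < a + b + (c + 1)
              · have h0 : (l : ℕ) - a - b - c = 0 := by omega
                have h5 : (l : ℕ) - a - b = c := by omega
                simp only [if_neg c1, if_neg c2, if_pos c4, if_neg c3, h0, h5]
                simp
              · have h0 : (l : ℕ) - a - b - c ≠ 0 := by omega
                have h5 : (l : ℕ) - a - b - c - 1 = (l : ℕ) - a - b - (c + 1) := by omega
                simp only [if_neg c1, if_neg c2, if_neg c4, if_neg c3, if_neg h0, h5]
      rw [step1, hP a b (by omega) _]
      set s := slotH n e' g' h' (fun m => if m = 0 then u (h c) else x (m - 1)) a b c with hs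
      have hsP : s P = u (h c) := by
        simp only [hs, slotH]
        have c1 : ¬ ((P : ℕ) < a) := by omega
        have c2 : ¬ ((P : ℕ) < a + b) := by omega
        have c3 : ¬ ((P : ℕ) < a + b + c) := by omega
        simp only [if_neg c1, if_neg c2, if_neg c3]
        rw [show (P : ℕ) - a - b - c = 0 by omega]
        simp
      have hss : s = Function.update s P (h' c + (u (h c) - h' c)) := by
        rw [show h' c + (u (h c) - h' c) = u (h c) by abel, ← hsP]
        simp
      rw [hss, ω.map_update_add]
      have hzero : ω (Function.update s P (u (h c) - h' c)) = 0 := by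
        apply omega_eq_zero_of_mem_span (p := P)
        rw [Function.update_self]
        have hsub : H' c ≤ span ℝ (Function.update s P (u (h c) - h' c) '' {q | q ≠ P}) := by
          rw [hhH' c (by omega), Submodule.span_le]
          rintro y ⟨m, hm, rfl⟩
          simp only [mem_Iio] at hm
          apply Submodule.subset_span
          have hmP : (⟨a + b + m, by omega⟩ : Fin n) ≠ P := by
            intro hcc
            have := congrArg Fin.val hcc
            simp only [hPv] at this
            omega
          refine ⟨⟨a + b + m, by omega⟩, hmP, ?_⟩
          rw [Function.update_of_ne hmP]
          simp only [hs, slotH]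
          have hvv : ((⟨a + b + m, by omega⟩ : Fin n) : ℕ) = a + b + m := rfl
          have c1 : ¬ (a + b + m < a) := by omega
          have c2 : ¬ (a + b + m < a + b) := by omega
          have c3 : a + b + m < a + b + c := by omega
          simp only [hvv, if_neg c1, if_neg c2, if_pos c3]
          congr 1
          omega
        exact hsub hz
      rw [hzero, add_zero]
      congr 1
      funext l
      have hl := l.2
      rcases eq_or_ne l P with hleq | hlp
      · rw [hleq, Function.update_self]
        simp only [slotH]
        have c1 : ¬ ((P : ℕ) < a) := by omega
        have c2 : ¬ ((P : ℕ) < a + b) := by omega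
        have c4 : (P : ℕ) < a + b + (c + 1) := by omega
        simp only [if_neg c1, if_neg c2, if_pos c4]
        rw [show (P : ℕ) - a - b = c by omega]
      · rw [Function.update_of_ne hlp]
        simp only [hs, slotH]
        by_cases c1 : (l : ℕ) < a
        · simp only [if_pos c1]
        · by_cases c2 : (l : ℕ) < a + b
          · simp only [if_neg c1, if_pos c2]
          · by_cases c3 : (l : ℕ) < a + b + c
            · have c4 : (l : ℕ) < a + b + (c + 1) := by omega
              simp only [if_neg c1, if_neg c2, if_pos c3, if_pos c4]
            · have hlPv : (l : ℕ) ≠ a + b + c := fun hcc => hlp (Fin.ext (by omega))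
              have c4 : ¬ ((l : ℕ) < a + b + (c + 1)) := by omega
              have h0 : (l : ℕ) - a - b - c ≠ 0 := by omega
              have h5 : (l : ℕ) - a - b - c - 1 = (l : ℕ) - a - b - (c + 1) := by omega
              simp only [if_neg c1, if_neg c2, if_neg c3, if_neg c4, if_neg h0, h5]
    · -- span equality at c+1
      have hIc : (Iio (c + 1) : Set ℕ) = insert c (Iio c) := by ext y; simp
      rw [hIc, Set.image_insert_eq, Set.image_insert_eq, Submodule.span_insert,
        Submodule.span_insert, hspan]
      have hzmem : u (h c) - h' c ∈ span ℝ (h' '' Iio c) := by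
        rw [← hhH' c (by omega)]
        exact hz
      apply le_antisymm
      · apply sup_le
        · rw [Submodule.span_le, Set.singleton_subset_iff]
          have : (⇑u ∘ h) c = h' c + (u (h c) - h' c) := by
            simp only [Function.comp_apply]; abel
          rw [this]
          exact Submodule.add_mem _
            (Submodule.mem_sup_left (Submodule.subset_span rfl))
            (Submodule.mem_sup_right hzmem)
        · exact le_sup_right
      · apply sup_le
        · rw [Submodule.span_le, Set.singleton_subset_iff]
          have : h' c = (⇑u ∘ h) c - (u (h c) - h' c) := by
            simp only [Function.comp_apply]; abel
          rw [this]
          exact Submodule.sub_mem _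
            (Submodule.mem_sup_left (Submodule.subset_span rfl))
            (Submodule.mem_sup_right hzmem)
        · exact le_sup_right

end Ctx2




theorem statement16 (n : ℕ) (V : Type*) [AddCommGroup V] [Module ℝ V] [FiniteDimensional ℝ V]
    (hV : Module.finrank ℝ V = n)
    (F G H F' G' H' : ℕ → Submodule ℝ V)
    (hF : IsFlag n F) (hG : IsFlag n G) (hH : IsFlag n H)
    (hF' : IsFlag n F') (hG' : IsFlag n G') (hH' : IsFlag n H')
    (hFGH : TransverseTriple n F G H) (hFGH' : TransverseTriple n F' G' H')
    (hratio : ∀ (ω : AlternatingMap ℝ V ℝ (Fin n)) (f g h f' g' h' : ℕ → V),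
      ω ≠ 0 → Adapted n F f → Adapted n G g → Adapted n H h →
      Adapted n F' f' → Adapted n G' g' → Adapted n H' h' →
      ∀ i j k : ℕ, 1 ≤ i → 1 ≤ j → 1 ≤ k → i + j + k = n →
        tripleRatio n ω f g h i j k = tripleRatio n ω f' g' h' i j k) :
    ∃ u : V ≃ₗ[ℝ] V, ∀ m, m ≤ n →
      Submodule.map (u : V →ₗ[ℝ] V) (F m) = F' m ∧ Submodule.map (u : V →ₗ[ℝ] V) (G m) = G' m ∧
      Submodule.map (u : V →ₗ[ℝ] V) (H m) = H' m := by
  rcases Nat.eq_zero_or_pos n with hn0 | hn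
  · refine ⟨LinearEquiv.refl ℝ V, ?_⟩
    intro m hm
    have hm0 : m = 0 := by omega
    subst hm0
    have hb : ∀ (W : ℕ → Submodule ℝ V), IsFlag n W →
        Submodule.map (LinearEquiv.refl ℝ V : V →ₗ[ℝ] V) (W 0) = W 0 := by
      intro W hW
      rw [hW.bot_eq]
      simp
    rw [hb F hF, hb G hG, hb H hH, hF.bot_eq, hF'.bot_eq, hG.bot_eq, hG'.bot_eq,
      hH.bot_eq, hH'.bot_eq]
    exact ⟨rfl, rfl, rfl⟩
  · obtain ⟨e, heF, heG, heH1⟩ := exists_frame hV hn hF hG hH hFGH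
    obtain ⟨e', heF', heG', heH1'⟩ := exists_frame hV hn hF' hG' hH' hFGH'
    have htople : ⊤ ≤ span ℝ (Set.range (fun i : Fin n => e (i : ℕ))) := by
      rw [show Set.range (fun i : Fin n => e (i : ℕ)) = e '' Iio n by
        ext x
        constructor
        · rintro ⟨i, rfl⟩; exact ⟨i, i.2, rfl⟩
        · rintro ⟨a, ha, rfl⟩; exact ⟨⟨a, ha⟩, rfl⟩]
      rw [← heF n le_rfl, hF.top_eq hV]
    have htople' : ⊤ ≤ span ℝ (Set.range (fun i : Fin n => e' (i : ℕ))) := by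
      rw [show Set.range (fun i : Fin n => e' (i : ℕ)) = e' '' Iio n by
        ext x
        constructor
        · rintro ⟨i, rfl⟩; exact ⟨i, i.2, rfl⟩
        · rintro ⟨a, ha, rfl⟩; exact ⟨⟨a, ha⟩, rfl⟩]
      rw [← heF' n le_rfl, hF'.top_eq hV]
    set bE : Basis (Fin n) ℝ V :=
      basisOfTopLeSpanOfCardEqFinrank (fun i : Fin n => e (i : ℕ)) htople (by simp [hV])
      with hbE
    set bE' : Basis (Fin n) ℝ V :=
      basisOfTopLeSpanOfCardEqFinrank (fun i : Fin n => e' (i : ℕ)) htople' (by simp [hV])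
      with hbE'
    have hbEcoe : ∀ i : Fin n, bE i = e (i : ℕ) := by
      intro i
      rw [hbE, coe_basisOfTopLeSpanOfCardEqFinrank]
    have hbEcoe' : ∀ i : Fin n, bE' i = e' (i : ℕ) := by
      intro i
      rw [hbE', coe_basisOfTopLeSpanOfCardEqFinrank]
    set ω : AlternatingMap ℝ V ℝ (Fin n) := bE.det with hωdef
    have hω : ω ≠ 0 := by
      intro h0
      have := Basis.det_self bE
      rw [← hωdef, h0] at this
      simp at this
    set ε : ℝ := ω ⇑bE' with hε
    have hεne : ε ≠ 0 := by
      rw [hε]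
      apply omega_ne_zero_of_span hV hω
      rw [bE'.span_eq]
    obtain ⟨h, hhH, hh0, hanc⟩ :=
      exists_h (G := G) hV hn hG hH hFGH heF heH1 hω (κ := (1 : ℝ)) one_ne_zero
    obtain ⟨h', hhH', hh0', hanc'⟩ :=
      exists_h (G := G') hV hn hG' hH' hFGH' heF' heH1' hω (κ := ε) hεne
    have hr := hratio ω e (fun q => e (n - 1 - q)) h e' (fun q => e' (n - 1 - q)) h'
      hω heF heG hhH heF' heG' hhH'
    have hΔ := delta_eq hV hn hFGH hFGH' heF heG hhH heF' heG' hhH' hh0 hh0'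
      bE bE' hbEcoe hbEcoe' hωdef hε hanc hanc' hr
    set u : V ≃ₗ[ℝ] V := bE.equiv bE' (Equiv.refl _) with hu
    have hue : ∀ a, a < n → u (e a) = e' a := by
      intro a ha
      have h1 := Basis.equiv_apply bE (⟨a, ha⟩ : Fin n) bE' (Equiv.refl _)
      rw [hbEcoe, hbEcoe'] at h1
      exact h1
    have hωu : ∀ s : Fin n → V, ω (⇑u ∘ s) = ε * ω s := fun s =>
      omega_comp_equiv bE bE' hωdef hε s
    have hmapH := map_H hV hn hF' hG' hH' hFGH' heF' heG' hhH hhH' hω hΔ hue hωu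
    refine ⟨u, ?_⟩
    intro m hm
    refine ⟨?_, ?_, ?_⟩
    · rw [heF m hm, heF' m hm, Submodule.map_span]
      congr 1
      rw [Set.image_image]
      apply Set.image_congr
      intro x hx
      simp only [mem_Iio] at hx
      exact hue x (by omega)
    · rw [heG m hm, heG' m hm, Submodule.map_span]
      congr 1
      rw [Set.image_image]
      apply Set.image_congr
      intro x hx
      exact hue (n - 1 - x) (by omega)
    · rw [hhH m hm, hhH' m hm, Submodule.map_span]
      rw [show ⇑(u : V →ₗ[ℝ] V) '' (h '' Iio m) = (⇑u ∘ h) '' Iio m by rw [Set.image_image]; rfl]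
      exact hmapH m hm
end

section
/- Let V be an n-dimensional real vector space, let (F,G) be a transverse pair of complete flags in V, and let (F,P,Q) be a transverse triple of complete flags in V whose first flag is F. Then for all integers i,j,k with 1 ≤ i ≤ n−1, j,k ≥ 0 and i+j+k = n, the endomorphism A^{i,j,k}_{F,P,Q} − A^{i,n−i}_{F,G} maps F^(m) into F^(m−1) for every 1 ≤ m ≤ n; in particular it is nilpotent. -/
lemma flagMono {n : ℕ} {V : Type*} [AddCommGroup V] [Module ℝ V]
    {F : ℕ → Submodule ℝ V} (hF : IsFlag n F) {a b : ℕ} (hab : a ≤ b) (hb : b ≤ n) :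
    F a ≤ F b := by
  induction b, hab using Nat.le_induction with
  | base => exact le_rfl
  | succ b hb' ih => exact (ih (by omega)).trans (hF.1 b (by omega))

theorem statement18 (n : ℕ) (V : Type*) [AddCommGroup V] [Module ℝ V] [FiniteDimensional ℝ V]
    (hV : Module.finrank ℝ V = n)
    (F G P Q : ℕ → Submodule ℝ V)
    (hF : IsFlag n F) (hG : IsFlag n G) (hP : IsFlag n P) (hQ : IsFlag n Q)
    (hFG : TransversePair n F G) (hFPQ : TransverseTriple n F P Q)
    (i j k : ℕ) (hi : 1 ≤ i) (hi' : i < n) (hijk : i + j + k = n)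
    (A B : Module.End ℝ V)
    (hA : IsEruption n i j k F P Q A) (hB : IsShearing n i F G B) :
    (∀ m, 1 ≤ m → m ≤ n → ∀ v ∈ F m, (A - B) v ∈ F (m - 1)) ∧ IsNilpotent (A - B) := by
  have hn : (n : ℝ) ≠ 0 := Nat.cast_ne_zero.mpr (by omega)
  set c : ℝ := ((n : ℝ) - (i : ℝ)) / (n : ℝ) with hc
  set d : ℝ := (-(i : ℝ)) / (n : ℝ) with hd
  have hcd : c - d = 1 := by rw [hc, hd]; field_simp; ring
  have hCFi : ∀ v : V, (A - B) v ∈ F i := by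
    intro v
    have h1 : F i ⊔ (P j ⊔ Q k) = ⊤ := by rw [← sup_assoc]; exact hFPQ i j k hijk
    have h2 : F i ⊔ G (n - i) = ⊤ := hFG i hi'.le
    obtain ⟨f, hf, w, hw, hv1⟩ := Submodule.mem_sup.mp
      (h1 ▸ Submodule.mem_top : v ∈ F i ⊔ (P j ⊔ Q k))
    obtain ⟨f', hf', w', hw', hv2⟩ := Submodule.mem_sup.mp
      (h2 ▸ Submodule.mem_top : v ∈ F i ⊔ G (n - i))
    have e1 : A v = c • f + d • w := by
      rw [← hv1, map_add, hA.1 f hf, hA.2 w hw]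
    have e2 : B v = c • f' + d • w' := by
      rw [← hv2, map_add, hB.1 f' hf', hB.2 w' hw']
    have hww : w' = w + f - f' := by
      have h : f + w = f' + w' := hv1.trans hv2.symm
      rw [eq_sub_iff_add_eq, add_comm w f, h, add_comm]
    have key : (A - B) v = (c - d) • (f - f') := by
      rw [LinearMap.sub_apply, e1, e2, hww]
      module
    rw [key, hcd, one_smul]
    exact sub_mem hf hf'
  have hzero : ∀ v ∈ F i, (A - B) v = 0 := by
    intro v hv
    rw [LinearMap.sub_apply, hA.1 v hv, hB.1 v hv, sub_self]
  constructor
  · intro m hm1 hm2 v hv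
    rcases le_or_gt m i with h | h
    · have : v ∈ F i := flagMono hF h hi'.le hv
      rw [hzero v this]
      exact zero_mem _
    · exact flagMono hF (by omega) (by omega) (hCFi v)
  · refine ⟨2, ?_⟩
    ext v
    have : ((A - B) * (A - B)) v = (A - B) ((A - B) v) := rfl
    rw [pow_two]
    rw [this, hzero _ (hCFi v), LinearMap.zero_apply]
end
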